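/- Let Ω ⊆ 𝕆 be a domain and Ω̂ := {(z,I) ∈ ℂ × 𝕊 : τ_I(z) ∈ Ω} its disjoint union of complex slices, equipped with the topology whose open sets are unions ⋃_I O^I × {I} with each O^I open in Ω^I. Then the canonical projection π : Ω̂ → Ω̂/≃ onto the quotient by the CCL equivalence relation is an open map. -/

import Mathlib

noncomputable section

/-- The octonions, realized as the Cayley–Dickson double of the quaternions. -/
@[ext] structure Octonion : Type where
  a : Quaternion ℝ
  b : Quaternion ℝ

notation "𝕆" => Octonion

namespace Octonion

instance : Zero 𝕆 := ⟨⟨0, 0⟩⟩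
instance : One 𝕆 := ⟨⟨1, 0⟩⟩
instance : Add 𝕆 := ⟨fun x y => ⟨x.a + y.a, x.b + y.b⟩⟩
instance : Neg 𝕆 := ⟨fun x => ⟨-x.a, -x.b⟩⟩
instance : Sub 𝕆 := ⟨fun x y => ⟨x.a - y.a, x.b - y.b⟩⟩
/-- Cayley–Dickson multiplication. -/
instance : Mul 𝕆 := ⟨fun x y => ⟨x.a * y.a - star y.b * x.b, y.b * x.a + x.b * star y.a⟩⟩
instance : SMul ℝ 𝕆 := ⟨fun r x => ⟨r • x.a, r • x.b⟩⟩
instance : SMul ℕ 𝕆 := ⟨fun n x => ⟨n • x.a, n • x.b⟩⟩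
instance : SMul ℤ 𝕆 := ⟨fun n x => ⟨n • x.a, n • x.b⟩⟩

def toProd (x : 𝕆) : Quaternion ℝ × Quaternion ℝ := (x.a, x.b)

lemma toProd_injective : Function.Injective toProd := by
  intro x y h
  cases x; cases y
  simpa [toProd, Prod.ext_iff, Octonion.mk.injEq] using h

instance : AddCommGroup 𝕆 :=
  Function.Injective.addCommGroup toProd toProd_injective rfl (fun _ _ => rfl) (fun _ => rfl)
    (fun _ _ => rfl) (fun _ _ => rfl) (fun _ _ => rfl)

def toProdHom : 𝕆 →+ Quaternion ℝ × Quaternion ℝ :=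
  { toFun := toProd, map_zero' := rfl, map_add' := fun _ _ => rfl }

instance : Module ℝ 𝕆 :=
  Function.Injective.module ℝ toProdHom toProd_injective (fun _ _ => rfl)

def toProdLin : 𝕆 →ₗ[ℝ] Quaternion ℝ × Quaternion ℝ :=
  { toFun := toProd, map_add' := fun _ _ => rfl, map_smul' := fun _ _ => rfl }

instance : NormedAddCommGroup 𝕆 := NormedAddCommGroup.induced 𝕆 _ toProdHom toProd_injective
instance : NormedSpace ℝ 𝕆 := NormedSpace.induced ℝ 𝕆 _ toProdLin

/-- Octonionic conjugation. -/
def conj (x : 𝕆) : 𝕆 := ⟨star x.a, -x.b⟩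

/-- The real part of an octonion. -/
def re (x : 𝕆) : ℝ := x.a.re

/-- The imaginary part of an octonion. -/
def im (x : 𝕆) : 𝕆 := ⟨x.a.im, x.b⟩

/-- The squared (Euclidean) norm of an octonion. -/
def normSq (x : 𝕆) : ℝ := Quaternion.normSq x.a + Quaternion.normSq x.b

/-- The (Euclidean) norm of an octonion. -/
def onorm (x : 𝕆) : ℝ := Real.sqrt (normSq x)

instance : Inv 𝕆 := ⟨fun x => (normSq x)⁻¹ • conj x⟩

/-- The sphere of imaginary units of `𝕆`. -/
def sph : Set 𝕆 := {I | onorm I = 1 ∧ re I = 0}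

/-- `tau I (α + β i) = α + β I`. -/
def tau (I : 𝕆) (z : ℂ) : 𝕆 := z.re • (1 : 𝕆) + z.im • I

end Octonion

namespace Octonion

/-- `γ` and `Θ` define a circular lifting `t ↦ τ_{Θ t}(γ t)`: `γ` is a continuous path in `ℂ`
(the base) and `Θ` a continuous path in the sphere of imaginary units (the spherical
coordinate). -/
def IsCircularLifting (γ : unitInterval → ℂ) (Θ : unitInterval → 𝕆) : Prop :=
  Continuous γ ∧ Continuous Θ ∧ ∀ t, Θ t ∈ sph

/-- `x` and `x'` are CCL-connected in `Ω`: they are the terminal points of a pair of coupled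
circular liftings contained in `Ω` (common base, same initial spherical coordinate). -/
def CCLConnected (Ω : Set 𝕆) (x x' : 𝕆) : Prop :=
  ∃ γ Θ₁ Θ₂, IsCircularLifting γ Θ₁ ∧ IsCircularLifting γ Θ₂ ∧ Θ₁ 0 = Θ₂ 0 ∧
    (∀ t, tau (Θ₁ t) (γ t) ∈ Ω) ∧ (∀ t, tau (Θ₂ t) (γ t) ∈ Ω) ∧
    tau (Θ₁ 1) (γ 1) = x ∧ tau (Θ₂ 1) (γ 1) = x'

/-- CCL-equivalence in `Ω`: the equivalence closure of CCL-connectedness (finite chains). -/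
def CCLEquiv (Ω : Set 𝕆) : 𝕆 → 𝕆 → Prop := Relation.EqvGen (CCLConnected Ω)

end Octonion

namespace Octonion

/-- The disjoint union `Ω̂` of the complex slices of `Ω`, topologized as a disjoint union
(a set is open iff it is a union `⋃_I O^I × {I}` with each `O^I` open in `Ω^I`). -/
abbrev OHat (Ω : Set 𝕆) : Type := Σ I : sph, {z : ℂ // tau I.1 z ∈ Ω}

/-- The CCL equivalence relation on `Ω̂`: `(z,I) ≃ (z',I')` iff `z = z'` and `τ_I z`,
`τ_{I'} z'` are CCL-equivalent in `Ω`. -/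
def ohatSetoid (Ω : Set 𝕆) : Setoid (OHat Ω) where
  r p q := p.2.1 = q.2.1 ∧ CCLEquiv Ω (tau p.1.1 p.2.1) (tau q.1.1 q.2.1)
  iseqv := ⟨fun p => ⟨rfl, Relation.EqvGen.refl _⟩,
    fun h => ⟨h.1.symm, Relation.EqvGen.symm _ _ h.2⟩,
    fun h h' => ⟨h.1.trans h'.1, Relation.EqvGen.trans _ _ _ h.2 h'.2⟩⟩

/-- The quotient `D_Ω` of `Ω̂` by CCL equivalence, with the quotient topology. -/
abbrev DOmega (Ω : Set 𝕆) : Type := Quotient (ohatSetoid Ω)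

end Octonion

namespace Octonion
variable {Ω : Set 𝕆}

lemma norm_def (x : 𝕆) : ‖x‖ = ‖toProd x‖ := rfl

lemma isometry_toProd : Isometry toProd :=
  AddMonoidHomClass.isometry_of_norm toProdHom (fun _ => rfl)

lemma continuous_a : Continuous (fun x : 𝕆 => x.a) :=
  continuous_fst.comp isometry_toProd.continuous

lemma continuous_b : Continuous (fun x : 𝕆 => x.b) :=
  continuous_snd.comp isometry_toProd.continuous

lemma continuous_mk' {α : Type*} [TopologicalSpace α] {f g : α → Quaternion ℝ}
    (hf : Continuous f) (hg : Continuous g) : Continuous (fun x => (⟨f x, g x⟩ : 𝕆)) := by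
  rw [isometry_toProd.isEmbedding.continuous_iff]
  exact hf.prodMk hg

lemma continuous_re : Continuous (re) :=
  (Quaternion.continuous_re).comp continuous_a

lemma continuous_onorm : Continuous onorm := by
  apply Real.continuous_sqrt.comp
  exact ((Quaternion.continuous_normSq).comp continuous_a).add
    ((Quaternion.continuous_normSq).comp continuous_b)

lemma smul_a (r : ℝ) (x : 𝕆) : (r • x).a = r • x.a := rfl
lemma smul_b (r : ℝ) (x : 𝕆) : (r • x).b = r • x.b := rfl
lemma add_a (x y : 𝕆) : (x + y).a = x.a + y.a := rfl
lemma add_b (x y : 𝕆) : (x + y).b = x.b + y.b := rfl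
lemma neg_a (x : 𝕆) : (-x).a = -x.a := rfl
lemma neg_b (x : 𝕆) : (-x).b = -x.b := rfl
lemma one_a : (1 : 𝕆).a = 1 := rfl
lemma one_b : (1 : 𝕆).b = 0 := rfl

lemma normSq_nonneg (x : 𝕆) : 0 ≤ normSq x :=
  add_nonneg (Quaternion.normSq_nonneg) (Quaternion.normSq_nonneg)

lemma onorm_nonneg (x : 𝕆) : 0 ≤ onorm x := Real.sqrt_nonneg _

lemma onorm_eq_zero {x : 𝕆} (h : onorm x = 0) : x = 0 := by
  have h2 : Quaternion.normSq x.a + Quaternion.normSq x.b = 0 :=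
    Real.sqrt_eq_zero (normSq_nonneg x) |>.mp h
  have ha : Quaternion.normSq x.a = 0 ∧ Quaternion.normSq x.b = 0 := by
    constructor <;> nlinarith [Quaternion.normSq_nonneg (a := x.a), Quaternion.normSq_nonneg (a := x.b)]
  ext1
  · exact Quaternion.normSq_eq_zero.mp ha.1
  · exact Quaternion.normSq_eq_zero.mp ha.2

lemma onorm_smul (r : ℝ) (x : 𝕆) : onorm (r • x) = |r| * onorm x := by
  unfold onorm normSq
  rw [smul_a, smul_b]
  have : Quaternion.normSq (r • x.a) + Quaternion.normSq (r • x.b)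
      = r^2 * (Quaternion.normSq x.a + Quaternion.normSq x.b) := by
    simp [Quaternion.normSq_smul]; ring
  rw [this, Real.sqrt_mul (sq_nonneg r), Real.sqrt_sq_eq_abs]

lemma onorm_neg (x : 𝕆) : onorm (-x) = onorm x := by
  have := onorm_smul (-1) x
  simpa using this

lemma re_smul (r : ℝ) (x : 𝕆) : re (r • x) = r * re x := by
  simp [re, smul_a]

lemma re_add (x y : 𝕆) : re (x + y) = re x + re y := by
  simp [re, add_a]

lemma re_one : re (1 : 𝕆) = 1 := by simp [re, one_a, Quaternion.re_one]

lemma re_neg (x : 𝕆) : re (-x) = - re x := by simp [re, neg_a]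

lemma neg_mem_sph {I : 𝕆} (h : I ∈ sph) : -I ∈ sph := by
  obtain ⟨h1, h2⟩ := h
  exact ⟨by rw [onorm_neg]; exact h1, by rw [re_neg, h2, neg_zero]⟩


lemma im_a (x : 𝕆) : (im x).a = x.a.im := rfl
lemma im_b (x : 𝕆) : (im x).b = x.b := rfl

lemma re_smul_one_add_im (x : 𝕆) : re x • 1 + im x = x := by
  ext1
  · show re x • (1 : Quaternion ℝ) + x.a.im = x.a
    have : re x • (1 : Quaternion ℝ) = ((x.a.re : ℝ) : Quaternion ℝ) := by
      ext <;> simp [re, Quaternion.re_smul, Quaternion.imI_smul, Quaternion.imJ_smul,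
        Quaternion.imK_smul, Quaternion.re_one, Quaternion.imI_one, Quaternion.imJ_one, Quaternion.imK_one]
    rw [this, Quaternion.re_add_im]
  · show re x • (0 : Quaternion ℝ) + x.b = x.b
    simp

lemma re_im (x : 𝕆) : re (im x) = 0 := by
  simp [re, im_a]

lemma im_tau {I : 𝕆} (hI : re I = 0) (z : ℂ) : im (tau I z) = z.im • I := by
  have hre : I.a.re = 0 := hI
  ext1
  · show (z.re • (1:Quaternion ℝ) + z.im • I.a).im = z.im • I.a
    ext <;> simp [Quaternion.re_smul, Quaternion.imI_smul, Quaternion.imJ_smul,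
        Quaternion.imK_smul, hre, Quaternion.re_one, Quaternion.imI_one, Quaternion.imJ_one, Quaternion.imK_one]
  · show z.re • (0:Quaternion ℝ) + z.im • I.b = z.im • I.b
    simp

lemma re_tau {I : 𝕆} (hI : re I = 0) (z : ℂ) : re (tau I z) = z.re := by
  show (z.re • (1:Quaternion ℝ) + z.im • I.a).re = z.re
  have hre : I.a.re = 0 := hI
  simp [Quaternion.re_smul, hre, Quaternion.re_one]

lemma onorm_im_tau {I : 𝕆} (hI : I ∈ sph) (z : ℂ) : onorm (im (tau I z)) = |z.im| := by
  rw [im_tau hI.2, onorm_smul, hI.1, mul_one]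

lemma tau_eq_of_im_zero {z : ℂ} (hz : z.im = 0) (I J : 𝕆) : tau I z = tau J z := by
  simp [tau, hz]

lemma tau_conj (I : 𝕆) (z : ℂ) : tau I ((starRingEnd ℂ) z) = tau (-I) z := by
  simp [tau, smul_neg]

lemma tau_inj {I J : 𝕆} {z : ℂ} (hz : z.im ≠ 0) (h : tau I z = tau J z) : I = J := by
  have : z.im • I = z.im • J := by
    have := congrArg (fun x => x - z.re • (1:𝕆)) h
    simpa [tau] using this
  exact smul_right_injective 𝕆 hz this

lemma continuous_tau (I : 𝕆) : Continuous (fun z : ℂ => tau I z) := by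
  unfold tau
  exact (Complex.continuous_re.smul continuous_const).add
    (Complex.continuous_im.smul continuous_const)

/-- The decomposition of any point with matching re/im data as `tau M z`. -/
lemma exists_tau_rep {y : 𝕆} {z : ℂ} (hz : z.im ≠ 0) (hre : re y = z.re)
    (him : onorm (im y) = |z.im|) : ∃ M ∈ sph, tau M z = y := by
  refine ⟨(z.im)⁻¹ • im y, ⟨?_, ?_⟩, ?_⟩
  · rw [onorm_smul, him, abs_inv, inv_mul_cancel₀ (by simpa using hz)]
  · rw [re_smul, re_im, mul_zero]
  · show z.re • 1 + z.im • (z.im)⁻¹ • im y = y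
    rw [smul_smul, mul_inv_cancel₀ hz, one_smul, ← hre, re_smul_one_add_im]

def e1 : 𝕆 := ⟨⟨0,1,0,0⟩, 0⟩
def e2 : 𝕆 := ⟨⟨0,0,1,0⟩, 0⟩

lemma e1_sph : e1 ∈ sph := by
  constructor
  · show Real.sqrt (Quaternion.normSq (⟨0,1,0,0⟩ : Quaternion ℝ) + Quaternion.normSq (0 : Quaternion ℝ)) = 1
    rw [show Quaternion.normSq (⟨0,1,0,0⟩ : Quaternion ℝ) = 1 by
      exact (Quaternion.normSq_def' _).trans (by norm_num)]
    rw [map_zero]; norm_num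
  · show (⟨0,1,0,0⟩ : Quaternion ℝ).re = 0
    rfl

lemma e2_sph : e2 ∈ sph := by
  constructor
  · show Real.sqrt (Quaternion.normSq (⟨0,0,1,0⟩ : Quaternion ℝ) + Quaternion.normSq (0 : Quaternion ℝ)) = 1
    rw [show Quaternion.normSq (⟨0,0,1,0⟩ : Quaternion ℝ) = 1 by
      exact (Quaternion.normSq_def' _).trans (by norm_num)]
    rw [map_zero]; norm_num
  · show (⟨0,0,1,0⟩ : Quaternion ℝ).re = 0
    rfl

lemma e2_ne_e1 : e2 ≠ e1 := by
  intro h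
  have := congrArg (fun x : 𝕆 => x.a.imJ) h
  simp [e1, e2] at this

lemma e2_ne_neg_e1 : e2 ≠ -e1 := by
  intro h
  have := congrArg (fun x : 𝕆 => x.a.imJ) h
  simp [e1, e2, neg_a] at this
  erw [Quaternion.imJ_neg] at this
  norm_num at this

/-- Spherical interpolation between non-antipodal points of the sphere. -/
lemma slerp {I J : 𝕆} (hI : I ∈ sph) (hJ : J ∈ sph) (hIJ : J ≠ -I) :
    ∃ Θ : ℝ → 𝕆, Continuous Θ ∧ (∀ s ≤ 0, Θ s = I) ∧ (∀ s, 1 ≤ s → Θ s = J) ∧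
      ∀ s, Θ s ∈ sph := by
  set φ : ℝ → ℝ := fun s => max 0 (min 1 s) with hφ
  have hφc : Continuous φ := continuous_const.max (continuous_const.min continuous_id)
  have hφ0 : ∀ s, 0 ≤ φ s := fun s => le_max_left _ _
  have hφ1 : ∀ s, φ s ≤ 1 := fun s => max_le (by norm_num) (min_le_left _ _)
  set v : ℝ → 𝕆 := fun c => (1 - c) • I + c • J with hv
  have hvne : ∀ c, 0 ≤ c → c ≤ 1 → v c ≠ 0 := by
    intro c h0 h1 hc0
    have hcj : c • J = -((1 - c) • I) := eq_neg_of_add_eq_zero_right hc0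
    have honc : onorm (c • J) = onorm ((1 - c) • I) := by rw [hcj, onorm_neg]
    rw [onorm_smul, onorm_smul, hI.1, hJ.1, mul_one, mul_one,
      abs_of_nonneg h0, abs_of_nonneg (by linarith)] at honc
    have hc : c = 1/2 := by linarith
    apply hIJ
    rw [show (1:ℝ) - c = c by linarith] at hcj
    rw [← smul_neg] at hcj
    exact smul_right_injective 𝕆 (by rw [hc]; norm_num) hcj
  have hpos : ∀ s, 0 < onorm (v (φ s)) := by
    intro s
    rcases lt_or_eq_of_le (onorm_nonneg (v (φ s))) with h | h
    · exact h
    · exact absurd (onorm_eq_zero h.symm) (hvne _ (hφ0 s) (hφ1 s))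
  refine ⟨fun s => (onorm (v (φ s)))⁻¹ • v (φ s), ?_, ?_, ?_, ?_⟩
  · have hvc : Continuous (fun s => v (φ s)) :=
      ((continuous_const.sub hφc).smul continuous_const).add (hφc.smul continuous_const)
    exact ((continuous_onorm.comp hvc).inv₀ (fun s => (hpos s).ne')).smul hvc
  · intro s hs
    have : φ s = 0 := max_eq_left (le_trans (min_le_right _ _) hs)
    simp only [this]
    rw [show v 0 = I by simp [hv]]
    rw [hI.1]; norm_num
  · intro s hs
    have : φ s = 1 := by
      rw [hφ]; simp only [min_eq_left hs]; exact max_eq_right (by norm_num)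
    simp only [this]
    rw [show v 1 = J by simp [hv]]
    rw [hJ.1]; norm_num
  · intro s
    constructor
    · rw [onorm_smul, abs_of_pos (inv_pos.mpr (hpos s)), inv_mul_cancel₀ (hpos s).ne']
    · rw [re_smul, show re (v (φ s)) = 0 by
        simp [hv, re_add, re_smul, hI.2, hJ.2], mul_zero]

/-- Any two points of the sphere are joined by a (clamped) continuous path in the sphere. -/
lemma sphPath {I J : 𝕆} (hI : I ∈ sph) (hJ : J ∈ sph) :
    ∃ Θ : ℝ → 𝕆, Continuous Θ ∧ (∀ s ≤ 0, Θ s = I) ∧ (∀ s, 1 ≤ s → Θ s = J) ∧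
      ∀ s, Θ s ∈ sph := by
  by_cases hIJ : J = -I
  · -- go through an intermediate point K ≠ ±I
    obtain ⟨K, hK, hKI, hKnI⟩ : ∃ K, K ∈ sph ∧ K ≠ I ∧ K ≠ -I := by
      by_cases h1 : I = e1 ∨ I = -e1
      · refine ⟨e2, e2_sph, ?_, ?_⟩
        · rcases h1 with h | h <;> rw [h]
          · exact e2_ne_e1
          · exact e2_ne_neg_e1
        · rcases h1 with h | h <;> rw [h]
          · exact e2_ne_neg_e1
          · rw [neg_neg]; exact e2_ne_e1
      · push_neg at h1
        refine ⟨e1, e1_sph, fun h => h1.1 h.symm, fun h => h1.2 ?_⟩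
        rw [eq_comm, neg_eq_iff_eq_neg] at h
        exact h
    obtain ⟨Θ₁, hc1, h01, h11, hs1⟩ := slerp hI hK hKnI
    obtain ⟨Θ₂, hc2, h02, h12, hs2⟩ := slerp hK hJ (by rw [hIJ]; intro h; exact hKI (neg_injective h).symm)
    refine ⟨fun s => if s ≤ 1/2 then Θ₁ (2*s) else Θ₂ (2*s - 1), ?_, ?_, ?_, ?_⟩
    · apply Continuous.if_le (hc1.comp (by continuity)) (hc2.comp (by continuity))
        continuous_id continuous_const
      intro s hs
      simp only [id_eq] at hs
      subst hs
      show Θ₁ _ = Θ₂ _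
      rw [h11 _ (by norm_num), h02 _ (by norm_num)]
    · intro s hs
      dsimp only
      rw [if_pos (by linarith), h01 _ (by linarith)]
    · intro s hs
      dsimp only
      rw [if_neg (by intro h; linarith), h12 _ (by linarith)]
    · intro s
      dsimp only
      by_cases h : s ≤ 1/2
      · rw [if_pos h]; exact hs1 _
      · rw [if_neg h]; exact hs2 _
  · exact slerp hI hJ hIJ

lemma samePoint (Ω : Set 𝕆) {K L : 𝕆} (hK : K ∈ sph) (hL : L ∈ sph) {z : ℂ}
    (h : tau K z = tau L z) {δ : ℝ} (hδ : 0 < δ)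
    (hballK : ∀ w ∈ Metric.ball z δ, tau K w ∈ Ω)
    (hballL : ∀ w ∈ Metric.ball z δ, tau L w ∈ Ω)
    {z' : ℂ} (hz' : z' ∈ Metric.ball z δ) :
    CCLEquiv Ω (tau K z') (tau L z') := by
  by_cases hzim : z.im = 0
  · -- go through the real point z via a path in the sphere
    obtain ⟨Θ, hΘc, hΘ0, hΘ1, hΘs⟩ := sphPath hK hL
    set γ : unitInterval → ℂ := fun t => z + (max 0 (2*t.1 - 1)) • (z' - z) with hγ
    have hγmem : ∀ t : unitInterval, γ t ∈ Metric.ball z δ := by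
      intro t
      have h0 : (0:ℝ) ≤ max 0 (2*t.1 - 1) := le_max_left _ _
      have h1 : max 0 (2*t.1 - 1) ≤ 1 := max_le (by norm_num) (by have := t.2.2; linarith)
      simp only [hγ, Metric.mem_ball, dist_eq_norm, add_sub_cancel_left, norm_smul,
        Real.norm_eq_abs, abs_of_nonneg h0]
      calc max 0 (2*t.1 - 1) * ‖z' - z‖ ≤ 1 * ‖z' - z‖ := by
            apply mul_le_mul_of_nonneg_right h1 (norm_nonneg _)
        _ = ‖z' - z‖ := one_mul _
        _ < δ := by simpa [dist_eq_norm] using hz'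
    have hγc : Continuous γ := by
      apply continuous_const.add
      exact ((continuous_const.max ((continuous_const.mul continuous_subtype_val).sub
        continuous_const)).smul continuous_const)
    apply Relation.EqvGen.rel
    refine ⟨γ, fun _ => K, fun t => Θ (2*t.1), ⟨hγc, continuous_const, fun _ => hK⟩,
      ⟨hγc, hΘc.comp (continuous_const.mul continuous_subtype_val), fun t => hΘs _⟩,
      ?_, ?_, ?_, ?_, ?_⟩
    · show K = Θ (2 * (0:unitInterval).1)
      rw [show (2 * (0:unitInterval).1 : ℝ) = 0 by norm_num, hΘ0 0 le_rfl]
    · intro t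
      exact hballK _ (hγmem t)
    · intro t
      by_cases ht : t.1 ≤ 1/2
      · have : γ t = z := by
          simp only [hγ]
          rw [max_eq_left (by linarith), zero_smul, add_zero]
        rw [this, tau_eq_of_im_zero hzim _ K]
        exact hballK z (Metric.mem_ball_self hδ)
      · show tau (Θ (2*t.1)) (γ t) ∈ Ω
        rw [hΘ1 (2*t.1) (by linarith [not_le.mp ht])]
        exact hballL _ (hγmem t)
    · show tau K (γ 1) = tau K z'
      congr 1
      simp only [hγ]
      rw [show (2 * (1:unitInterval).1 - 1 : ℝ) = 1 by norm_num, max_eq_right (by norm_num),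
        one_smul, add_sub_cancel]
    · show tau (Θ (2 * (1:unitInterval).1)) (γ 1) = tau L z'
      rw [hΘ1 _ (by norm_num)]
      congr 1
      simp only [hγ]
      rw [show (2 * (1:unitInterval).1 - 1 : ℝ) = 1 by norm_num, max_eq_right (by norm_num),
        one_smul, add_sub_cancel]
  · -- K = L
    rw [tau_inj hzim h]
    exact Relation.EqvGen.refl _

lemma extendLift {Ω : Set 𝕆} {γ : unitInterval → ℂ} {Θ₁ Θ₂ : unitInterval → 𝕆}
    (h₁ : IsCircularLifting γ Θ₁) (h₂ : IsCircularLifting γ Θ₂) (h0 : Θ₁ 0 = Θ₂ 0)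
    (hm₁ : ∀ t, tau (Θ₁ t) (γ t) ∈ Ω) (hm₂ : ∀ t, tau (Θ₂ t) (γ t) ∈ Ω)
    (w' : ℂ)
    (hseg : ∀ c : ℝ, 0 ≤ c → c ≤ 1 →
      tau (Θ₁ 1) (γ 1 + c • (w' - γ 1)) ∈ Ω ∧ tau (Θ₂ 1) (γ 1 + c • (w' - γ 1)) ∈ Ω) :
    CCLConnected Ω (tau (Θ₁ 1) w') (tau (Θ₂ 1) w') := by
  have hσmem : ∀ t : unitInterval, min 1 (2*t.1) ∈ unitInterval := by
    intro t
    exact ⟨le_min zero_le_one (by have := t.2.1; linarith), min_le_left _ _⟩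
  set σ : unitInterval → unitInterval := fun t => ⟨min 1 (2*t.1), hσmem t⟩ with hσ
  have hσc : Continuous σ :=
    Continuous.subtype_mk (continuous_const.min (continuous_const.mul continuous_subtype_val)) _
  have hσ0 : σ 0 = 0 := by
    apply Subtype.ext
    show min 1 (2*(0:unitInterval).1) = 0
    norm_num
  have hσ1 : σ 1 = 1 := by
    apply Subtype.ext
    show min 1 (2*(1:unitInterval).1) = 1
    norm_num
  have hσhalf : ∀ t : unitInterval, ¬ t.1 ≤ 1/2 → σ t = 1 := by
    intro t ht
    apply Subtype.ext
    show min 1 (2*t.1) = 1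
    rw [min_eq_left (by linarith [not_le.mp ht])]
  set c : unitInterval → ℝ := fun t => max 0 (2*t.1 - 1) with hc
  have hc0 : ∀ t : unitInterval, 0 ≤ c t := fun t => le_max_left _ _
  have hc1 : ∀ t : unitInterval, c t ≤ 1 := fun t =>
    max_le (by norm_num) (by have := t.2.2; linarith)
  have hcc : Continuous c := continuous_const.max
    ((continuous_const.mul continuous_subtype_val).sub continuous_const)
  have hchalf : ∀ t : unitInterval, t.1 ≤ 1/2 → c t = 0 := by
    intro t ht
    exact max_eq_left (by linarith)
  set γ' : unitInterval → ℂ := fun t => γ (σ t) + (c t) • (w' - γ 1) with hγ'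
  have hγ'c : Continuous γ' := (h₁.1.comp hσc).add (hcc.smul continuous_const)
  have key : ∀ (Θ : unitInterval → 𝕆), IsCircularLifting γ Θ →
      (∀ t, tau (Θ t) (γ t) ∈ Ω) →
      (∀ c' : ℝ, 0 ≤ c' → c' ≤ 1 → tau (Θ 1) (γ 1 + c' • (w' - γ 1)) ∈ Ω) →
      ∀ t, tau (Θ (σ t)) (γ' t) ∈ Ω := by
    intro Θ hΘ hm hs t
    by_cases ht : t.1 ≤ 1/2
    · simp only [hγ', hchalf t ht, zero_smul, add_zero]
      exact hm _
    · rw [hσhalf t ht]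
      simp only [hγ', hσhalf t ht]
      exact hs _ (hc0 t) (hc1 t)
  refine ⟨γ', Θ₁ ∘ σ, Θ₂ ∘ σ, ⟨hγ'c, h₁.2.1.comp hσc, fun t => h₁.2.2 _⟩,
    ⟨hγ'c, h₂.2.1.comp hσc, fun t => h₂.2.2 _⟩, ?_, ?_, ?_, ?_, ?_⟩
  · show Θ₁ (σ 0) = Θ₂ (σ 0)
    rw [hσ0, h0]
  · exact key Θ₁ h₁ hm₁ (fun c' h0' h1' => (hseg c' h0' h1').1)
  · exact key Θ₂ h₂ hm₂ (fun c' h0' h1' => (hseg c' h0' h1').2)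
  · show tau (Θ₁ (σ 1)) (γ' 1) = tau (Θ₁ 1) w'
    rw [hσ1]
    congr 1
    simp only [hγ', hσ1]
    rw [show c 1 = 1 by rw [hc]; show max 0 (2*(1:unitInterval).1 - 1) = 1; norm_num,
      one_smul, add_sub_cancel]
  · show tau (Θ₂ (σ 1)) (γ' 1) = tau (Θ₂ 1) w'
    rw [hσ1]
    congr 1
    simp only [hγ', hσ1]
    rw [show c 1 = 1 by rw [hc]; show max 0 (2*(1:unitInterval).1 - 1) = 1; norm_num,
      one_smul, add_sub_cancel]

lemma ball_tau {Ω : Set 𝕆} (hΩo : IsOpen Ω) (I : 𝕆) {z : ℂ} (h : tau I z ∈ Ω) :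
    ∃ δ, 0 < δ ∧ ∀ w ∈ Metric.ball z δ, tau I w ∈ Ω := by
  have : IsOpen ((fun w => tau I w) ⁻¹' Ω) := hΩo.preimage (continuous_tau I)
  obtain ⟨δ, hδ, hball⟩ := Metric.isOpen_iff.mp this z h
  exact ⟨δ, hδ, fun w hw => hball hw⟩

lemma relCaseAux {Ω : Set 𝕆} (hΩo : IsOpen Ω) {γ : unitInterval → ℂ}
    {Θ₁ Θ₂ : unitInterval → 𝕆}
    (l1 : IsCircularLifting γ Θ₁) (l2 : IsCircularLifting γ Θ₂) (h0 : Θ₁ 0 = Θ₂ 0)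
    (m1 : ∀ t, tau (Θ₁ t) (γ t) ∈ Ω) (m2 : ∀ t, tau (Θ₂ t) (γ t) ∈ Ω)
    {K L : 𝕆} {z : ℂ} (hK : K ∈ sph) (hL : L ∈ sph) (hw : γ 1 = z)
    (hKz : tau K z = tau (Θ₁ 1) (γ 1)) (hLz : tau L z = tau (Θ₂ 1) (γ 1)) :
    ∃ δ, 0 < δ ∧ ∀ z' ∈ Metric.ball z δ,
      tau K z' ∈ Ω ∧ tau L z' ∈ Ω ∧ CCLEquiv Ω (tau K z') (tau L z') := by
  have hA : Θ₁ 1 ∈ sph := l1.2.2 1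
  have hB : Θ₂ 1 ∈ sph := l2.2.2 1
  have hxmem : tau K z ∈ Ω := by rw [hKz]; exact m1 1
  have hymem : tau L z ∈ Ω := by rw [hLz]; exact m2 1
  have hAmem : tau (Θ₁ 1) z ∈ Ω := by rw [← hw]; exact m1 1
  have hBmem : tau (Θ₂ 1) z ∈ Ω := by rw [← hw]; exact m2 1
  obtain ⟨δK, hδK, hK'⟩ := ball_tau hΩo K hxmem
  obtain ⟨δL, hδL, hL'⟩ := ball_tau hΩo L hymem
  obtain ⟨δA, hδA, hA'⟩ := ball_tau hΩo (Θ₁ 1) hAmem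
  obtain ⟨δB, hδB, hB'⟩ := ball_tau hΩo (Θ₂ 1) hBmem
  set δ := min (min δK δL) (min δA δB) with hδdef
  have hδ : 0 < δ := by positivity
  have sK : Metric.ball z δ ⊆ Metric.ball z δK :=
    Metric.ball_subset_ball (le_trans (min_le_left _ _) (min_le_left _ _))
  have sL : Metric.ball z δ ⊆ Metric.ball z δL :=
    Metric.ball_subset_ball (le_trans (min_le_left _ _) (min_le_right _ _))
  have sA : Metric.ball z δ ⊆ Metric.ball z δA :=
    Metric.ball_subset_ball (le_trans (min_le_right _ _) (min_le_left _ _))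
  have sB : Metric.ball z δ ⊆ Metric.ball z δB :=
    Metric.ball_subset_ball (le_trans (min_le_right _ _) (min_le_right _ _))
  refine ⟨δ, hδ, fun z' hz' => ?_⟩
  refine ⟨hK' _ (sK hz'), hL' _ (sL hz'), ?_⟩
  -- the segment from z to z' stays in the ball
  have hsegball : ∀ c : ℝ, 0 ≤ c → c ≤ 1 → z + c • (z' - z) ∈ Metric.ball z δ := by
    intro c h0c h1c
    simp only [Metric.mem_ball, dist_eq_norm, add_sub_cancel_left, norm_smul,
      Real.norm_eq_abs, abs_of_nonneg h0c]
    calc c * ‖z' - z‖ ≤ 1 * ‖z' - z‖ := mul_le_mul_of_nonneg_right h1c (norm_nonneg _)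
      _ = ‖z' - z‖ := one_mul _
      _ < δ := by simpa [dist_eq_norm] using hz'
  have hAB : CCLConnected Ω (tau (Θ₁ 1) z') (tau (Θ₂ 1) z') := by
    apply extendLift l1 l2 h0 m1 m2
    intro c h0c h1c
    rw [hw]
    exact ⟨hA' _ (sA (hsegball c h0c h1c)), hB' _ (sB (hsegball c h0c h1c))⟩
  have hKA : CCLEquiv Ω (tau K z') (tau (Θ₁ 1) z') := by
    apply samePoint Ω hK hA (by rw [hKz, hw]) hδ (fun w hw' => hK' _ (sK hw'))
      (fun w hw' => hA' _ (sA hw')) hz'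
  have hBL : CCLEquiv Ω (tau (Θ₂ 1) z') (tau L z') := by
    apply samePoint Ω hB hL (by rw [hLz, hw]) hδ (fun w hw' => hB' _ (sB hw'))
      (fun w hw' => hL' _ (sL hw')) hz'
  exact Relation.EqvGen.trans _ _ _
    (Relation.EqvGen.trans _ _ _ hKA (Relation.EqvGen.rel _ _ hAB)) hBL

lemma relCase {Ω : Set 𝕆} (hΩo : IsOpen Ω) {x y : 𝕆} (h : CCLConnected Ω x y)
    {K L : 𝕆} {z : ℂ} (hK : K ∈ sph) (hL : L ∈ sph)
    (hKz : tau K z = x) (hLz : tau L z = y) :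
    ∃ δ, 0 < δ ∧ ∀ z' ∈ Metric.ball z δ,
      tau K z' ∈ Ω ∧ tau L z' ∈ Ω ∧ CCLEquiv Ω (tau K z') (tau L z') := by
  obtain ⟨γ, Θ₁, Θ₂, l1, l2, h0, m1, m2, e1x, e2y⟩ := h
  -- `γ 1` is either `z` or its conjugate
  have hA : Θ₁ 1 ∈ sph := l1.2.2 1
  have hre : (γ 1).re = z.re := by
    have h1 : re x = z.re := by rw [← hKz, re_tau hK.2]
    have h2 : re x = (γ 1).re := by rw [← e1x, re_tau hA.2]
    rw [← h1, h2]
  have him : (γ 1).im = z.im ∨ (γ 1).im = -z.im := by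
    have h1 : onorm (im x) = |z.im| := by rw [← hKz, onorm_im_tau hK]
    have h2 : onorm (im x) = |(γ 1).im| := by rw [← e1x, onorm_im_tau hA]
    have : |(γ 1).im| = |z.im| := by rw [← h1, h2]
    exact abs_eq_abs.mp this
  rcases him with him | him
  · -- γ 1 = z
    have hw : γ 1 = z := Complex.ext hre him
    exact relCaseAux hΩo l1 l2 h0 m1 m2 hK hL hw (by rw [hKz, ← e1x])
      (by rw [hLz, ← e2y])
  · -- γ 1 = conj z
    have hw : γ 1 = (starRingEnd ℂ) z := Complex.ext (by simpa using hre) (by simpa using him)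
    have hKz' : tau (-K) ((starRingEnd ℂ) z) = tau (Θ₁ 1) (γ 1) := by
      rw [tau_conj, neg_neg, hKz, e1x]
    have hLz' : tau (-L) ((starRingEnd ℂ) z) = tau (Θ₂ 1) (γ 1) := by
      rw [tau_conj, neg_neg, hLz, e2y]
    obtain ⟨δ, hδ, H⟩ := relCaseAux hΩo l1 l2 h0 m1 m2 (neg_mem_sph hK) (neg_mem_sph hL)
      hw hKz' hLz'
    refine ⟨δ, hδ, fun z' hz' => ?_⟩
    have hz'' : (starRingEnd ℂ) z' ∈ Metric.ball ((starRingEnd ℂ) z) δ := by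
      simpa [Metric.mem_ball, Complex.dist_conj_conj] using hz'
    obtain ⟨hm1, hm2, heq⟩ := H _ hz''
    simp only [tau_conj, neg_neg] at hm1 hm2 heq
    exact ⟨hm1, hm2, heq⟩

/-- Strengthened induction predicate for CCL equivalence (local infectivity). -/
def Good (Ω : Set 𝕆) (x y : 𝕆) : Prop :=
  re x = re y ∧ onorm (im x) = onorm (im y) ∧ (x = y ∨ (x ∈ Ω ∧ y ∈ Ω)) ∧
  ∀ K L : 𝕆, ∀ z : ℂ, K ∈ sph → L ∈ sph → tau K z = x → tau L z = y → x ∈ Ω →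
    ∃ δ, 0 < δ ∧ ∀ z' ∈ Metric.ball z δ,
      tau K z' ∈ Ω ∧ tau L z' ∈ Ω ∧ CCLEquiv Ω (tau K z') (tau L z')

lemma good_of_eqvGen {Ω : Set 𝕆} (hΩo : IsOpen Ω) {x y : 𝕆} (h : CCLEquiv Ω x y) :
    Good Ω x y := by
  have h' : Relation.EqvGen (CCLConnected Ω) x y := h
  clear h
  induction h' with
  | rel a b hab =>
    obtain ⟨γ, Θ₁, Θ₂, l1, l2, h0, m1, m2, e1x, e2y⟩ := hab
    have hA : Θ₁ 1 ∈ sph := l1.2.2 1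
    have hB : Θ₂ 1 ∈ sph := l2.2.2 1
    refine ⟨?_, ?_, Or.inr ⟨e1x ▸ m1 1, e2y ▸ m2 1⟩, ?_⟩
    · rw [← e1x, ← e2y, re_tau hA.2, re_tau hB.2]
    · rw [← e1x, ← e2y, onorm_im_tau hA, onorm_im_tau hB]
    · intro K L z hK hL hKz hLz _
      exact relCase hΩo ⟨γ, Θ₁, Θ₂, l1, l2, h0, m1, m2, e1x, e2y⟩ hK hL hKz hLz
  | refl a =>
    refine ⟨rfl, rfl, Or.inl rfl, ?_⟩
    intro K L z hK hL hKz hLz hx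
    obtain ⟨δK, hδK, hK'⟩ := ball_tau hΩo K (hKz ▸ hx)
    obtain ⟨δL, hδL, hL'⟩ := ball_tau hΩo L (hLz ▸ hx)
    refine ⟨min δK δL, by positivity, fun z' hz' => ?_⟩
    have sK : z' ∈ Metric.ball z δK := Metric.ball_subset_ball (min_le_left _ _) hz'
    have sL : z' ∈ Metric.ball z δL := Metric.ball_subset_ball (min_le_right _ _) hz'
    refine ⟨hK' _ sK, hL' _ sL, ?_⟩
    exact samePoint Ω hK hL (hKz.trans hLz.symm) (lt_min hδK hδL)
      (fun w hw => hK' _ (Metric.ball_subset_ball (min_le_left _ _) hw))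
      (fun w hw => hL' _ (Metric.ball_subset_ball (min_le_right _ _) hw)) hz'
  | symm a b hab ih =>
    obtain ⟨ihre, ihim, ihor, ihδ⟩ := ih
    refine ⟨ihre.symm, ihim.symm, ?_, ?_⟩
    · rcases ihor with h | h
      · exact Or.inl h.symm
      · exact Or.inr ⟨h.2, h.1⟩
    · intro K L z hK hL hKz hLz hb
      have ha : a ∈ Ω := by
        rcases ihor with h | h
        · exact h ▸ hb
        · exact h.1
      obtain ⟨δ, hδ, H⟩ := ihδ L K z hL hK hLz hKz ha
      refine ⟨δ, hδ, fun z' hz' => ?_⟩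
      obtain ⟨h1, h2, h3⟩ := H z' hz'
      exact ⟨h2, h1, Relation.EqvGen.symm _ _ h3⟩
  | trans a b c hab hbc ih1 ih2 =>
    obtain ⟨ih1re, ih1im, ih1or, ih1δ⟩ := ih1
    obtain ⟨ih2re, ih2im, ih2or, ih2δ⟩ := ih2
    refine ⟨ih1re.trans ih2re, ih1im.trans ih2im, ?_, ?_⟩
    · rcases ih1or with h | h
      · rw [h]; exact ih2or
      · rcases ih2or with h' | h'
        · exact Or.inr ⟨h.1, h' ▸ h.2⟩
        · exact Or.inr ⟨h.1, h'.2⟩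
    · intro K L z hK hL hKz hLz ha
      have hb : b ∈ Ω := by
        rcases ih1or with h | h
        · exact h ▸ ha
        · exact h.2
      have hrex : re a = z.re := by rw [← hKz, re_tau hK.2]
      have himx : onorm (im a) = |z.im| := by rw [← hKz, onorm_im_tau hK]
      by_cases hzim : z.im = 0
      · -- b = a, since both are the real point z.re
        have himb : im b = 0 := by
          apply onorm_eq_zero
          rw [← ih1im, himx, hzim, abs_zero]
        have hima : im a = 0 := by
          apply onorm_eq_zero
          rw [himx, hzim, abs_zero]
        have hab' : a = b := by
          rw [← re_smul_one_add_im a, ← re_smul_one_add_im b, hima, himb, ih1re]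
        obtain ⟨δ, hδ, H⟩ := ih2δ K L z hK hL (hab' ▸ hKz) hLz (hab' ▸ ha)
        exact ⟨δ, hδ, H⟩
      · obtain ⟨M, hM, hMz⟩ := exists_tau_rep hzim (ih1re ▸ hrex) (ih1im ▸ himx)
        obtain ⟨δ₁, hδ₁, H₁⟩ := ih1δ K M z hK hM hKz hMz ha
        obtain ⟨δ₂, hδ₂, H₂⟩ := ih2δ M L z hM hL hMz hLz hb
        refine ⟨min δ₁ δ₂, by positivity, fun z' hz' => ?_⟩
        obtain ⟨hm1, _, heq1⟩ := H₁ z' (Metric.ball_subset_ball (min_le_left _ _) hz')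
        obtain ⟨_, hm2, heq2⟩ := H₂ z' (Metric.ball_subset_ball (min_le_right _ _) hz')
        exact ⟨hm1, hm2, Relation.EqvGen.trans _ _ _ heq1 heq2⟩

end Octonion

open Octonion in
/-- the canonical projection `π : Ω̂ → Ω̂/≃` onto the quotient by the CCL
equivalence relation is an open map. -/
theorem stmt16 (Ω : Set 𝕆) (hΩo : IsOpen Ω) (hΩc : IsConnected Ω) :
    IsOpenMap (Quotient.mk (ohatSetoid Ω) : OHat Ω → DOmega Ω) := by
  intro U hU
  rw [isOpen_coinduced (f := Quotient.mk (ohatSetoid Ω))]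
  rw [isOpen_sigma_iff]
  intro I
  rw [Metric.isOpen_iff]
  intro zz hzz
  obtain ⟨q, hqU, hq⟩ := hzz
  have hrel := Quotient.exact hq
  obtain ⟨hz, heqv⟩ := hrel
  -- hz : q.2.1 = zz.1
  have hU' : IsOpen (Sigma.mk q.1 ⁻¹' U) := isOpen_sigma_iff.mp hU q.1
  have hq2 : q.2 ∈ Sigma.mk q.1 ⁻¹' U := by
    show Sigma.mk q.1 q.2 ∈ U
    rw [Sigma.eta]
    exact hqU
  obtain ⟨ε, hε, hball⟩ := Metric.isOpen_iff.mp hU' q.2 hq2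
  have g := good_of_eqvGen hΩo heqv
  obtain ⟨δ, hδ, H⟩ := g.2.2.2 q.1.1 I.1 zz.1 q.1.2 I.2 (by rw [hz]) rfl q.2.2
  refine ⟨min δ ε, by positivity, fun zz' hzz' => ?_⟩
  have hd : dist zz'.1 zz.1 < min δ ε := by
    rw [← Subtype.dist_eq]
    exact hzz'
  obtain ⟨hJ', hI', heq'⟩ := H zz'.1 (by
    rw [Metric.mem_ball]
    exact lt_of_lt_of_le hd (min_le_left _ _))
  refine ⟨Sigma.mk q.1 ⟨zz'.1, hJ'⟩, ?_, ?_⟩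
  · apply hball
    rw [Metric.mem_ball, Subtype.dist_eq]
    show dist zz'.1 q.2.1 < ε
    rw [hz]
    exact lt_of_lt_of_le hd (min_le_right _ _)
  · apply Quotient.sound
    exact ⟨rfl, heq'⟩
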